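/- Let X ⊆ ℂ be a locally compact subspace such that every compact subset K ⊆ X is an α-set, and let c > 0. Then there exists η ∈ C₀(X) with η(z) > 0 for all z ∈ X such that h(z) := e^{-c|z|²}·η(z) is a cyclic vector for M_z in C₀(X): q·h ∈ C₀(X) for every q ∈ Π(z), and {q·h : q ∈ Π(z)} is dense in C₀(X) with respect to the supremum norm. -/

import Mathlib

open MeasureTheory Filter

open Filter Set Topology Metric Polynomial



namespace Stmt12Aux

/-- polynomial times gaussian tends to zero -/
lemma gaussDecay (q : Polynomial ℂ) {c' : ℝ} (hc' : 0 < c') :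
    Tendsto (fun z : ℂ => ‖q.eval z‖ * Real.exp (-c' * ‖z‖ ^ 2)) (cocompact ℂ) (nhds 0) := by
  have hterm : ∀ i : ℕ, Tendsto (fun r : ℝ => r ^ i * Real.exp (-c' * r ^ 2)) atTop (nhds 0) := by
    intro i
    have h1 : Tendsto (fun r : ℝ => c' * r) atTop atTop :=
      Tendsto.const_mul_atTop hc' tendsto_id
    have h2 : Tendsto (fun r : ℝ => (c' * r) ^ i * Real.exp (-(c' * r))) atTop (nhds 0) :=
      (Real.tendsto_pow_mul_exp_neg_atTop_nhds_zero i).comp h1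
    have h3 : Tendsto (fun r : ℝ => (c' : ℝ)⁻¹ ^ i * ((c' * r) ^ i * Real.exp (-(c' * r))))
        atTop (nhds 0) := by
      simpa using h2.const_mul ((c' : ℝ)⁻¹ ^ i)
    have h4 : Tendsto (fun r : ℝ => r ^ i * Real.exp (-(c' * r))) atTop (nhds 0) := by
      refine h3.congr' ?_
      filter_upwards [eventually_ge_atTop (0:ℝ)] with r _
      have hcc : c'⁻¹ ^ i * (c' * r) ^ i = r ^ i := by
        rw [mul_pow, ← mul_assoc, ← mul_pow, inv_mul_cancel₀ hc'.ne', one_pow, one_mul]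
      rw [← mul_assoc, hcc]
    apply squeeze_zero' (g := fun r : ℝ => r ^ i * Real.exp (-(c' * r)))
    · filter_upwards [eventually_ge_atTop (0:ℝ)] with r hr
      positivity
    · filter_upwards [eventually_ge_atTop (1:ℝ)] with r hr
      have hr0 : (0:ℝ) ≤ r := by linarith
      have hrr : r ≤ r ^ 2 := by nlinarith
      have : -c' * r ^ 2 ≤ -(c' * r) := by nlinarith [mul_le_mul_of_nonneg_left hrr hc'.le]
      exact mul_le_mul_of_nonneg_left (Real.exp_le_exp.2 this) (by positivity)
    · exact h4
  set n := q.natDegree + 1 with hn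
  have hg : Tendsto (fun r : ℝ =>
      ∑ i ∈ Finset.range n, ‖q.coeff i‖ * (r ^ i * Real.exp (-c' * r ^ 2))) atTop (nhds 0) := by
    have := tendsto_finset_sum (Finset.range n)
      (fun i _ => (hterm i).const_mul ‖q.coeff i‖)
    simpa using this
  have hcomp : Tendsto (fun z : ℂ =>
      ∑ i ∈ Finset.range n, ‖q.coeff i‖ * (‖z‖ ^ i * Real.exp (-c' * ‖z‖ ^ 2)))
      (cocompact ℂ) (nhds 0) := hg.comp tendsto_norm_cocompact_atTop
  apply squeeze_zero (fun z => by positivity) _ hcomp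
  intro z
  have hb : ‖q.eval z‖ ≤ ∑ i ∈ Finset.range n, ‖q.coeff i‖ * ‖z‖ ^ i := by
    rw [Polynomial.eval_eq_sum_range]
    refine (norm_sum_le _ _).trans ?_
    refine Finset.sum_le_sum fun i _ => ?_
    rw [norm_mul, norm_pow]
  calc ‖q.eval z‖ * Real.exp (-c' * ‖z‖ ^ 2)
      ≤ (∑ i ∈ Finset.range n, ‖q.coeff i‖ * ‖z‖ ^ i) * Real.exp (-c' * ‖z‖ ^ 2) :=
        mul_le_mul_of_nonneg_right hb (Real.exp_nonneg _)
    _ = ∑ i ∈ Finset.range n, ‖q.coeff i‖ * (‖z‖ ^ i * Real.exp (-c' * ‖z‖ ^ 2)) := by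
        rw [Finset.sum_mul]; exact Finset.sum_congr rfl fun i _ => by ring

lemma gaussCont (q : Polynomial ℂ) (c' : ℝ) :
    Continuous (fun z : ℂ => ‖q.eval z‖ * Real.exp (-c' * ‖z‖ ^ 2)) := by
  have h1 : Continuous fun z : ℂ => q.eval z := q.continuous
  continuity

lemma gaussBound (q : Polynomial ℂ) {c' : ℝ} (hc' : 0 < c') :
    ∃ C : ℝ, 0 ≤ C ∧ ∀ z : ℂ, ‖q.eval z‖ * Real.exp (-c' * ‖z‖ ^ 2) ≤ C := by
  obtain ⟨s, hs, hsb⟩ := (Filter.hasBasis_cocompact.tendsto_iff Metric.nhds_basis_ball).1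
    (gaussDecay q hc') 1 one_pos
  obtain ⟨C, hC⟩ := hs.exists_bound_of_continuousOn (gaussCont q c').continuousOn
  refine ⟨max C 1, le_trans zero_le_one (le_max_right _ _), fun z => ?_⟩
  by_cases hz : z ∈ s
  · exact le_trans (le_abs_self _) (le_trans (hC z hz) (le_max_left _ _))
  · have := hsb z hz
    rw [mem_ball, dist_zero_right] at this
    exact le_trans (le_abs_self _) (le_trans this.le (le_max_right _ _))

end Stmt12Aux


namespace Stmt12Aux2

def auxF (X : Set ℂ) : Set ℂ := closure X \ X

noncomputable def auxDelta (X : Set ℂ) (z : ℂ) : ℝ :=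
  (min 1 (EMetric.infEdist z (auxF X))).toReal

lemma auxDelta_cont (X : Set ℂ) : Continuous (auxDelta X) := by
  have h1 : Continuous fun z : ℂ => min 1 (EMetric.infEdist z (auxF X)) :=
    continuous_const.min EMetric.continuous_infEdist
  refine ContinuousOn.comp_continuous ENNReal.continuousOn_toReal h1 fun z => ?_
  simp only [mem_setOf_eq]
  exact ne_top_of_le_ne_top ENNReal.one_ne_top (min_le_left _ _)

lemma auxDelta_nonneg (X : Set ℂ) (z : ℂ) : 0 ≤ auxDelta X z := ENNReal.toReal_nonneg

lemma auxDelta_le_one (X : Set ℂ) (z : ℂ) : auxDelta X z ≤ 1 := by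
  have := ENNReal.toReal_mono ENNReal.one_ne_top
    (min_le_left 1 (EMetric.infEdist z (auxF X)))
  simpa [auxDelta] using this

lemma auxDelta_zero_of_mem (X : Set ℂ) {z : ℂ} (hz : z ∈ auxF X) : auxDelta X z = 0 := by
  unfold auxDelta
  rw [EMetric.infEdist, EMetric.infEdist_zero_of_mem hz]
  simp

lemma auxDelta_pos (X : Set ℂ) (hF : IsClosed (auxF X)) {z : ℂ} (hz : z ∈ X) :
    0 < auxDelta X z := by
  have hne : EMetric.infEdist z (auxF X) ≠ 0 := by
    intro h0
    have : z ∈ closure (auxF X) := EMetric.mem_closure_iff_infEdist_zero.2 h0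
    rw [hF.closure_eq] at this
    exact this.2 hz
  have hpos : 0 < min 1 (EMetric.infEdist z (auxF X)) :=
    lt_min zero_lt_one (pos_iff_ne_zero.2 hne)
  exact ENNReal.toReal_pos hpos.ne' (ne_top_of_le_ne_top ENNReal.one_ne_top (min_le_left _ _))

lemma auxF_closed (X : Set ℂ) [LocallyCompactSpace X] : IsClosed (auxF X) := by
  set U : Set ℂ := ⋃₀ {V : Set ℂ | IsOpen V ∧ V ∩ closure X ⊆ X} with hU
  have hUopen : IsOpen U := isOpen_sUnion fun V hV => hV.1
  have hXU : X ⊆ U := by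
    intro x hx
    obtain ⟨C, hC, hCn⟩ := exists_compact_mem_nhds (⟨x, hx⟩ : X)
    rw [mem_nhds_subtype] at hCn
    obtain ⟨u, hu, hsub⟩ := hCn
    obtain ⟨V, hVu, hVopen, hxV⟩ := _root_.mem_nhds_iff.mp hu
    have himg : IsCompact (Subtype.val '' C) := hC.image continuous_subtype_val
    have hVX : V ∩ closure X ⊆ X := by
      intro y hy
      have h1 : y ∈ closure (V ∩ X) := IsOpen.inter_closure hVopen hy
      have h2 : V ∩ X ⊆ Subtype.val '' C := by
        intro w hw
        exact ⟨⟨w, hw.2⟩, hsub (hVu hw.1), rfl⟩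
      have h3 : y ∈ Subtype.val '' C := by
        have := (closure_mono h2) h1
        rwa [himg.isClosed.closure_eq] at this
      exact Subtype.coe_image_subset X C h3
    exact ⟨V, ⟨hVopen, hVX⟩, hxV⟩
  have hEq : auxF X = closure X ∩ Uᶜ := by
    ext y
    constructor
    · rintro ⟨hy1, hy2⟩
      refine ⟨hy1, fun hyU => ?_⟩
      obtain ⟨V, hV, hyV⟩ := hyU
      exact hy2 (hV.2 ⟨hyV, hy1⟩)
    · rintro ⟨hy1, hy2⟩
      exact ⟨hy1, fun hyX => hy2 (hXU hyX)⟩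
  rw [hEq]
  exact isClosed_closure.inter hUopen.isClosed_compl

noncomputable def auxEta0 (X : Set ℂ) (z : ℂ) : ℝ := Real.exp (-‖z‖ ^ 2) * auxDelta X z

lemma auxEta0_cont (X : Set ℂ) : Continuous (auxEta0 X) := by
  unfold auxEta0
  have := auxDelta_cont X
  continuity

lemma auxEta0_nonneg (X : Set ℂ) (z : ℂ) : 0 ≤ auxEta0 X z :=
  mul_nonneg (Real.exp_nonneg _) (auxDelta_nonneg X z)

lemma auxEta0_le_one (X : Set ℂ) (z : ℂ) : auxEta0 X z ≤ 1 := by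
  have h1 : Real.exp (-‖z‖ ^ 2) ≤ 1 := Real.exp_le_one_iff.2 (neg_nonpos.mpr (by positivity))
  calc Real.exp (-‖z‖ ^ 2) * auxDelta X z ≤ 1 * 1 :=
        mul_le_mul h1 (auxDelta_le_one X z) (auxDelta_nonneg X z) zero_le_one
    _ = 1 := one_mul 1

lemma auxEta0_pos (X : Set ℂ) (hF : IsClosed (auxF X)) {z : ℂ} (hz : z ∈ X) :
    0 < auxEta0 X z := mul_pos (Real.exp_pos _) (auxDelta_pos X hF hz)

/-- Key tendsto lemma: a nonneg function tending to zero on `ℂ` times `auxDelta` tends to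
zero along `cocompact X`. -/
lemma tendstoA (X : Set ℂ) (u : ℂ → ℝ) (hu : Continuous u) (h0 : ∀ z, 0 ≤ u z)
    (ht : Tendsto u (cocompact ℂ) (nhds 0)) :
    Tendsto (fun z : X => u ↑z * auxDelta X ↑z) (cocompact X) (nhds 0) := by
  rw [Filter.hasBasis_cocompact.tendsto_iff Metric.nhds_basis_ball]
  intro ε hε
  obtain ⟨C, hC, hCb⟩ := (Filter.hasBasis_cocompact.tendsto_iff Metric.nhds_basis_ball).1 ht ε hε
  set Kc : Set ℂ := closure X ∩ {z | ε ≤ u z * auxDelta X z} with hKc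
  have hKcX : Kc ⊆ X := by
    rintro z ⟨hz1, hz2⟩
    by_contra hzX
    have hzF : z ∈ auxF X := ⟨hz1, hzX⟩
    have : (ε : ℝ) ≤ 0 := by
      have := auxDelta_zero_of_mem X hzF
      simp only [mem_setOf_eq] at hz2
      rw [this, mul_zero] at hz2
      exact hz2
    linarith
  have hKsubC : Kc ⊆ C := by
    rintro z ⟨_, hz2⟩
    by_contra hzC
    have h1 := hCb z hzC
    rw [mem_ball, dist_zero_right] at h1
    have h2 : u z * auxDelta X z ≤ u z := by
      calc u z * auxDelta X z ≤ u z * 1 :=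
            mul_le_mul_of_nonneg_left (auxDelta_le_one X z) (h0 z)
        _ = u z := mul_one _
    have := lt_of_le_of_lt (le_trans hz2 h2) (lt_of_abs_lt h1)
    exact lt_irrefl _ this
  have hKccpt : IsCompact Kc :=
    Metric.isCompact_iff_isClosed_bounded.2
      ⟨isClosed_closure.inter (isClosed_le continuous_const (hu.mul (auxDelta_cont X))),
       hC.isBounded.subset hKsubC⟩
  refine ⟨Subtype.val ⁻¹' Kc, ?_, ?_⟩
  · rw [Topology.IsEmbedding.isCompact_iff Topology.IsEmbedding.subtypeVal]
    have : Subtype.val '' (Subtype.val ⁻¹' Kc : Set X) = Kc := by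
      rw [Subtype.image_preimage_coe, inter_eq_self_of_subset_right hKcX]
    rwa [this]
  · intro z hz
    rw [mem_ball, dist_zero_right]
    have h1 : ¬ (ε ≤ u ↑z * auxDelta X ↑z) := by
      intro h
      exact hz ⟨subset_closure z.2, h⟩
    rw [Real.norm_eq_abs, abs_of_nonneg (mul_nonneg (h0 _) (auxDelta_nonneg X _))]
    linarith

end Stmt12Aux2


namespace Stmt12Aux3

noncomputable def evalQ (P : Polynomial ℚ × Polynomial ℚ) (z : ℂ) : ℂ :=
  Polynomial.aeval z P.1 + Complex.I * Polynomial.aeval z P.2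

lemma evalQ_cont (P : Polynomial ℚ × Polynomial ℚ) : Continuous (evalQ P) := by
  unfold evalQ
  exact (Polynomial.continuous_aeval P.1).add
    (continuous_const.mul (Polynomial.continuous_aeval P.2))

lemma ratApprox (q : Polynomial ℂ) (R : ℝ) {ρ : ℝ} (hρ : 0 < ρ) :
    ∃ P : Polynomial ℚ × Polynomial ℚ, ∀ w : ℂ, ‖w‖ ≤ R → ‖evalQ P w - q.eval w‖ < ρ := by
  obtain ⟨n₀, hn₀⟩ : ∃ n : ℕ, n = q.natDegree + 1 := ⟨_, rfl⟩
  set M : ℝ := max R 1 with hM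
  have hM1 : (1:ℝ) ≤ M := le_max_right _ _
  have hMpow : (0:ℝ) < M ^ n₀ := pow_pos (lt_of_lt_of_le zero_lt_one hM1) _
  set ε : ℝ := ρ / (4 * n₀ * M ^ n₀) with hε
  have hεpos : 0 < ε := by
    apply div_pos hρ
    have : (0:ℝ) < (n₀:ℝ) := by rw [hn₀]; positivity
    positivity
  choose a ha using fun i : ℕ => exists_rat_near ((q.coeff i).re) hεpos
  choose b hb using fun i : ℕ => exists_rat_near ((q.coeff i).im) hεpos
  refine ⟨(∑ i ∈ Finset.range n₀, Polynomial.C (a i) * Polynomial.X ^ i,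
           ∑ i ∈ Finset.range n₀, Polynomial.C (b i) * Polynomial.X ^ i), fun w hw => ?_⟩
  have heval : evalQ (∑ i ∈ Finset.range n₀, Polynomial.C (a i) * Polynomial.X ^ i,
           ∑ i ∈ Finset.range n₀, Polynomial.C (b i) * Polynomial.X ^ i) w
      = ∑ i ∈ Finset.range n₀, (((a i : ℂ) + Complex.I * (b i : ℂ)) * w ^ i) := by
    unfold evalQ
    simp only [map_sum, map_mul, Polynomial.aeval_C, Polynomial.aeval_X_pow, map_pow,
      Polynomial.aeval_X]
    rw [Finset.mul_sum, ← Finset.sum_add_distrib]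
    refine Finset.sum_congr rfl fun i _ => ?_
    have h1 : (algebraMap ℚ ℂ) (a i) = ((a i : ℚ) : ℂ) := eq_ratCast _ _
    have h2 : (algebraMap ℚ ℂ) (b i) = ((b i : ℚ) : ℂ) := eq_ratCast _ _
    rw [h1, h2]; ring
  have hqe : q.eval w = ∑ i ∈ Finset.range n₀, q.coeff i * w ^ i := by
    rw [hn₀]; exact Polynomial.eval_eq_sum_range w
  rw [heval, hqe, ← Finset.sum_sub_distrib]
  have hterm : ∀ i ∈ Finset.range n₀,
      ‖((a i : ℂ) + Complex.I * (b i : ℂ)) * w ^ i - q.coeff i * w ^ i‖ ≤ 2 * ε * M ^ n₀ := by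
    intro i hi
    have hi' : i ≤ n₀ := (Finset.mem_range.1 hi).le
    have hcoef : ‖((a i : ℂ) + Complex.I * (b i : ℂ)) - q.coeff i‖ ≤ 2 * ε := by
      have hdecomp : ((a i : ℂ) + Complex.I * (b i : ℂ)) - q.coeff i
          = (((a i : ℝ) - (q.coeff i).re : ℝ) : ℂ)
            + Complex.I * (((b i : ℝ) - (q.coeff i).im : ℝ) : ℂ) := by
        simp [Complex.ext_iff]
      rw [hdecomp]
      refine (norm_add_le _ _).trans ?_
      rw [norm_mul, Complex.norm_I, one_mul, Complex.norm_real, Complex.norm_real]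
      rw [Real.norm_eq_abs, Real.norm_eq_abs]
      have h1 : |(a i : ℝ) - (q.coeff i).re| < ε := by
        rw [abs_sub_comm]; exact ha i
      have h2 : |(b i : ℝ) - (q.coeff i).im| < ε := by
        rw [abs_sub_comm]; exact hb i
      linarith
    have hwpow : ‖w ^ i‖ ≤ M ^ n₀ := by
      rw [norm_pow]
      calc ‖w‖ ^ i ≤ M ^ i :=
            pow_le_pow_left₀ (norm_nonneg w) (hw.trans (le_max_left _ _)) i
        _ ≤ M ^ n₀ := pow_le_pow_right₀ hM1 hi'
    calc ‖((a i : ℂ) + Complex.I * (b i : ℂ)) * w ^ i - q.coeff i * w ^ i‖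
        = ‖(((a i : ℂ) + Complex.I * (b i : ℂ)) - q.coeff i)‖ * ‖w ^ i‖ := by
          rw [← norm_mul, sub_mul]
      _ ≤ (2 * ε) * M ^ n₀ :=
          mul_le_mul hcoef hwpow (norm_nonneg _) (by linarith [hεpos])
  calc ‖∑ i ∈ Finset.range n₀, (((a i : ℂ) + Complex.I * (b i : ℂ)) * w ^ i - q.coeff i * w ^ i)‖
      ≤ ∑ i ∈ Finset.range n₀, ‖((a i : ℂ) + Complex.I * (b i : ℂ)) * w ^ i - q.coeff i * w ^ i‖ :=
        norm_sum_le _ _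
    _ ≤ ∑ _i ∈ Finset.range n₀, 2 * ε * M ^ n₀ := Finset.sum_le_sum hterm
    _ = n₀ * (2 * ε * M ^ n₀) := by rw [Finset.sum_const, Finset.card_range]; ring
    _ = ρ / 2 := by
        have hn : ((n₀:ℕ):ℝ) ≠ 0 := by rw [hn₀]; positivity
        have hMn : M ^ n₀ ≠ 0 := ne_of_gt hMpow
        rw [hε]
        field_simp
        ring
    _ < ρ := by linarith

end Stmt12Aux3


namespace Stmt12Aux4

variable (X : Set ℂ) [LocallyCompactSpace X]

lemma exists_psi (A : Set X) (hA : IsCompact A) :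
    ∃ ψB : (X → ℝ) × Set X, IsCompact ψB.2 ∧ Continuous ψB.1 ∧
      (∀ z, ψB.1 z ∈ Set.Icc (0:ℝ) 1) ∧ (∀ z ∈ A, ψB.1 z = 0) ∧
      (∀ z ∉ ψB.2, ψB.1 z = 1) ∧ A ⊆ ψB.2 := by
  obtain ⟨f, hf1, _, hfc, hficc⟩ :=
    exists_continuous_one_zero_of_isCompact hA isClosed_empty (disjoint_empty _)
  refine ⟨(fun z => 1 - f z, tsupport ⇑f ∪ A), hfc.union hA,
    continuous_const.sub f.continuous, fun z => ?_, fun z hz => ?_, fun z hz => ?_,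
    subset_union_right⟩
  · dsimp only
    have := hficc z
    exact ⟨by linarith [this.2], by linarith [this.1]⟩
  · dsimp only
    have h1 : f z = 1 := hf1 hz
    rw [h1]; ring
  · dsimp only at hz ⊢
    rw [image_eq_zero_of_notMem_tsupport (fun h => hz (mem_union_left _ h))]
    ring

noncomputable def psiPack (A : Set X) (hA : IsCompact A) : (X → ℝ) × Set X :=
  (exists_psi X A hA).choose

lemma psiPack_spec (A : Set X) (hA : IsCompact A) :
    IsCompact (psiPack X A hA).2 ∧ Continuous (psiPack X A hA).1 ∧
      (∀ z, (psiPack X A hA).1 z ∈ Set.Icc (0:ℝ) 1) ∧ (∀ z ∈ A, (psiPack X A hA).1 z = 0) ∧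
      (∀ z ∉ (psiPack X A hA).2, (psiPack X A hA).1 z = 1) ∧ A ⊆ (psiPack X A hA).2 :=
  (exists_psi X A hA).choose_spec

variable (K' : CompactExhaustion X)

noncomputable def ASeq : ℕ → {A : Set X // IsCompact A} := fun j =>
  Nat.rec ⟨K' 0, K'.isCompact 0⟩
    (fun j prev => ⟨prev.1 ∪ (psiPack X prev.1 prev.2).2 ∪ K' (j+1),
      ((prev.2.union (psiPack_spec X prev.1 prev.2).1).union (K'.isCompact (j+1)))⟩) j

noncomputable def Aset (j : ℕ) : Set X := (ASeq X K' j).1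

lemma Aset_compact (j : ℕ) : IsCompact (Aset X K' j) := (ASeq X K' j).2

noncomputable def psiF (j : ℕ) : X → ℝ := (psiPack X (Aset X K' j) (Aset_compact X K' j)).1

noncomputable def Bset (j : ℕ) : Set X := (psiPack X (Aset X K' j) (Aset_compact X K' j)).2

lemma Aset_succ (j : ℕ) : Aset X K' (j+1) = Aset X K' j ∪ Bset X K' j ∪ K' (j+1) := rfl

lemma Bset_compact (j : ℕ) : IsCompact (Bset X K' j) :=
  (psiPack_spec X (Aset X K' j) (Aset_compact X K' j)).1

lemma psiF_cont (j : ℕ) : Continuous (psiF X K' j) :=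
  (psiPack_spec X (Aset X K' j) (Aset_compact X K' j)).2.1

lemma psiF_mem_Icc (j : ℕ) (z : X) : psiF X K' j z ∈ Set.Icc (0:ℝ) 1 :=
  (psiPack_spec X (Aset X K' j) (Aset_compact X K' j)).2.2.1 z

lemma psiF_zero (j : ℕ) {z : X} (hz : z ∈ Aset X K' j) : psiF X K' j z = 0 :=
  (psiPack_spec X (Aset X K' j) (Aset_compact X K' j)).2.2.2.1 z hz

lemma psiF_one (j : ℕ) {z : X} (hz : z ∉ Bset X K' j) : psiF X K' j z = 1 :=
  (psiPack_spec X (Aset X K' j) (Aset_compact X K' j)).2.2.2.2.1 z hz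

lemma Aset_subset_Bset (j : ℕ) : Aset X K' j ⊆ Bset X K' j :=
  (psiPack_spec X (Aset X K' j) (Aset_compact X K' j)).2.2.2.2.2

lemma Aset_mono : ∀ {j i : ℕ}, j ≤ i → Aset X K' j ⊆ Aset X K' i := by
  intro j i hji
  induction i with
  | zero => rw [Nat.le_zero.1 hji]
  | succ i ih =>
    rcases Nat.lt_or_ge j (i+1) with h | h
    · have := ih (Nat.lt_succ_iff.1 h)
      rw [Aset_succ]
      exact this.trans (subset_union_left.trans subset_union_left)
    · have : j = i + 1 := le_antisymm hji h
      rw [this]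

lemma Bset_subset_Asucc (j : ℕ) : Bset X K' j ⊆ Aset X K' (j+1) := by
  rw [Aset_succ]
  exact subset_union_right.trans subset_union_left

lemma Ksub (j : ℕ) : (K' j : Set X) ⊆ Aset X K' j := by
  cases j with
  | zero => exact subset_rfl
  | succ j => rw [Aset_succ]; exact subset_union_right

end Stmt12Aux4

namespace Stmt12Aux5
open Stmt12Aux Stmt12Aux2 Stmt12Aux3 Stmt12Aux4

variable (X : Set ℂ) [LocallyCompactSpace X] (K' : CompactExhaustion X) (c : ℝ)

noncomputable def sfun (a : ℕ → ℝ) (j : ℕ) (z : X) : ℝ :=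
  ∑ i ∈ Finset.range j, a i * psiF X K' i z

lemma sfun_cont (a : ℕ → ℝ) (j : ℕ) : Continuous (sfun X K' a j) :=
  continuous_finset_sum _ fun i _ => continuous_const.mul (psiF_cont X K' i)

lemma exists_step
    (halpha : ∀ K : Set ℂ, K ⊆ X → IsCompact K →
      ∀ φ : K → ℂ, Continuous φ → ∀ ε : ℝ, 0 < ε →
        ∃ q : Polynomial ℂ, ∀ z : K, ‖Polynomial.eval (z : ℂ) q - φ z‖ < ε)
    (hc : 0 < c) (hFc : IsClosed (auxF X)) (j : ℕ) (g : X → ℂ) (hgc : Continuous g)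
    (hgs : ∀ z : X, z ∉ Aset X K' j → g z = 0) (μ : ℝ) (hμ : 0 < μ) (apre : ℕ → ℝ) :
    ∃ ap : ℝ × Polynomial ℂ, 0 ≤ ap.1 ∧
      (∀ z : X, z ∈ Bset X K' j →
        ‖Polynomial.eval (z : ℂ) ap.2 *
          ((Real.exp (-c * ‖(z:ℂ)‖ ^ 2) *
            (auxEta0 X z * Real.exp (-(sfun X K' apre j z + ap.1 * psiF X K' j z))) : ℝ) : ℂ)
          - g z‖ < μ) ∧
      (∀ z : X, ‖Polynomial.eval (z : ℂ) ap.2‖ * (Real.exp (-c * ‖(z:ℂ)‖ ^ 2) * auxEta0 X z)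
        * Real.exp (-ap.1) < μ) := by
  set hj : X → ℝ := fun z =>
    Real.exp (-c * ‖(z:ℂ)‖ ^ 2) * (auxEta0 X z * Real.exp (-(sfun X K' apre j z))) with hhj
  have hjcont : Continuous hj := by
    have h1 : Continuous fun z : X => sfun X K' apre j z := sfun_cont X K' apre j
    have h2 : Continuous fun z : X => ‖(z:ℂ)‖ := continuous_subtype_val.norm
    exact (Real.continuous_exp.comp ((continuous_const.mul (h2.pow 2)))).mul
      (((auxEta0_cont X).comp continuous_subtype_val).mul (Real.continuous_exp.comp h1.neg))
  have hjpos : ∀ z : X, 0 < hj z := fun z =>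
    mul_pos (Real.exp_pos _) (mul_pos (auxEta0_pos X hFc z.2) (Real.exp_pos _))
  obtain ⟨M0, hM0⟩ :=
    IsCompact.exists_bound_of_continuousOn (Bset_compact X K' j) hjcont.continuousOn
  set M : ℝ := max M0 0 with hM
  have hMnn : 0 ≤ M := le_max_right _ _
  have hjleM : ∀ z ∈ Bset X K' j, hj z ≤ M := by
    intro z hz
    have := hM0 z hz
    rw [Real.norm_eq_abs] at this
    exact ((le_abs_self _).trans this).trans (le_max_left _ _)
  set ε' : ℝ := μ / (M + 1) with hε'
  have hε'pos : 0 < ε' := div_pos hμ (by linarith)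
  set B : Set ℂ := Subtype.val '' Bset X K' j with hB
  have hBX : B ⊆ X := Subtype.coe_image_subset X _
  have hBc : IsCompact B := (Bset_compact X K' j).image continuous_subtype_val
  set inc : B → X := fun w => ⟨w.1, hBX w.2⟩ with hinc
  have hinccont : Continuous inc := Continuous.subtype_mk continuous_subtype_val _
  set φ : B → ℂ := fun w => g (inc w) / ((hj (inc w) : ℝ) : ℂ) with hφ
  have hφcont : Continuous φ :=
    (hgc.comp hinccont).div ((Complex.continuous_ofReal).comp (hjcont.comp hinccont))
      (fun w => by exact_mod_cast (hjpos (inc w)).ne')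
  obtain ⟨p, hp⟩ := halpha B hBX hBc φ hφcont ε' hε'pos
  obtain ⟨C0, hC0nn, hC0⟩ := gaussBound p hc
  set aj : ℝ := max 0 (Real.log ((C0 + 1) / μ)) with haj
  have hajnn : 0 ≤ aj := le_max_left _ _
  have hexp : Real.exp (-aj) ≤ μ / (C0 + 1) := by
    have h1 : Real.log ((C0 + 1) / μ) ≤ aj := le_max_right _ _
    have h2 : -aj ≤ Real.log (μ / (C0 + 1)) := by
      have h3 : Real.log ((C0 + 1) / μ) = -Real.log (μ / (C0 + 1)) := by
        rw [← Real.log_inv, inv_div]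
      linarith
    calc Real.exp (-aj) ≤ Real.exp (Real.log (μ / (C0 + 1))) := Real.exp_le_exp.2 h2
      _ = μ / (C0 + 1) := Real.exp_log (by positivity)
  refine ⟨(aj, p), hajnn, ?_, ?_⟩
  · -- part (ii)
    intro z hz
    have hzB : (z : ℂ) ∈ B := mem_image_of_mem _ hz
    have hpz := hp ⟨(z : ℂ), hzB⟩
    have hincz : inc ⟨(z : ℂ), hzB⟩ = z := Subtype.ext rfl
    have hφz : φ ⟨(z : ℂ), hzB⟩ = g z / ((hj z : ℝ) : ℂ) := by
      rw [hφ]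
    rw [hφz] at hpz
    set t : ℝ := Real.exp (-(aj * psiF X K' j z)) with ht
    have htpos : 0 < t := Real.exp_pos _
    have htle1 : t ≤ 1 := by
      rw [ht, ← Real.exp_zero]
      exact Real.exp_le_exp.2 (neg_nonpos.2 (mul_nonneg hajnn (psiF_mem_Icc X K' j z).1))
    have hreal : Real.exp (-c * ‖(z:ℂ)‖ ^ 2) *
        (auxEta0 X z * Real.exp (-(sfun X K' apre j z + aj * psiF X K' j z))) = hj z * t := by
      rw [hhj, ht, neg_add, Real.exp_add]
      ring
    simp only []
    rw [hreal]
    have hjne : ((hj z : ℝ) : ℂ) ≠ 0 := by exact_mod_cast (hjpos z).ne'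
    have hkey : Polynomial.eval (z:ℂ) p * ((hj z * t : ℝ) : ℂ) - g z
        = (Polynomial.eval (z:ℂ) p - g z / ((hj z : ℝ) : ℂ)) * ((hj z : ℝ) : ℂ) * ((t : ℝ) : ℂ)
          + g z * (((t : ℝ) : ℂ) - 1) := by
      rw [Complex.ofReal_mul]
      field_simp
      ring
    rw [hkey]
    refine lt_of_le_of_lt (norm_add_le _ _) ?_
    rw [norm_mul, norm_mul, norm_mul]
    have h2 : ‖((hj z : ℝ) : ℂ)‖ = hj z := by
      rw [Complex.norm_real, Real.norm_eq_abs, abs_of_pos (hjpos z)]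
    have h3 : ‖((t : ℝ) : ℂ)‖ ≤ 1 := by
      rw [Complex.norm_real, Real.norm_eq_abs, abs_of_pos htpos]
      exact htle1
    have hsecond : ‖g z‖ * ‖((t : ℝ) : ℂ) - 1‖ = 0 := by
      by_cases hψ : psiF X K' j z = 0
      · have : t = 1 := by rw [ht, hψ, mul_zero, neg_zero, Real.exp_zero]
        rw [this]
        simp
      · have hzA : z ∉ Aset X K' j := fun h => hψ (psiF_zero X K' j h)
        rw [hgs z hzA]
        simp
    rw [hsecond, add_zero]
    calc ‖Polynomial.eval (z:ℂ) p - g z / ((hj z : ℝ) : ℂ)‖ * ‖((hj z : ℝ) : ℂ)‖ * ‖((t : ℝ) : ℂ)‖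
        ≤ ‖Polynomial.eval (z:ℂ) p - g z / ((hj z : ℝ) : ℂ)‖ * (M + 1) * 1 := by
          apply mul_le_mul _ h3 (norm_nonneg _) (by positivity)
          apply mul_le_mul le_rfl _ (norm_nonneg _) (norm_nonneg _)
          rw [h2]
          linarith [hjleM z hz]
      _ = ‖Polynomial.eval (z:ℂ) p - g z / ((hj z : ℝ) : ℂ)‖ * (M + 1) := mul_one _
      _ < ε' * (M + 1) := mul_lt_mul_of_pos_right hpz (by linarith)
      _ = μ := by rw [hε']; field_simp
  · -- part (iii)
    intro z
    have h1 : ‖Polynomial.eval (z:ℂ) p‖ * (Real.exp (-c * ‖(z:ℂ)‖ ^ 2) * auxEta0 X z) ≤ C0 := by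
      calc ‖Polynomial.eval (z:ℂ) p‖ * (Real.exp (-c * ‖(z:ℂ)‖ ^ 2) * auxEta0 X z)
          = (‖Polynomial.eval (z:ℂ) p‖ * Real.exp (-c * ‖(z:ℂ)‖ ^ 2)) * auxEta0 X z := by ring
        _ ≤ C0 * 1 := mul_le_mul (hC0 (z:ℂ)) (auxEta0_le_one X z) (auxEta0_nonneg X z) hC0nn
        _ = C0 := mul_one _
    calc ‖Polynomial.eval (z:ℂ) p‖ * (Real.exp (-c * ‖(z:ℂ)‖ ^ 2) * auxEta0 X z)
          * Real.exp (-aj)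
        ≤ C0 * Real.exp (-aj) := mul_le_mul_of_nonneg_right h1 (Real.exp_nonneg _)
      _ ≤ C0 * (μ / (C0 + 1)) := mul_le_mul_of_nonneg_left hexp hC0nn
      _ < μ := by
          have h2 : (0:ℝ) < C0 + 1 := by linarith
          rw [mul_div_assoc', div_lt_iff₀ h2]
          nlinarith

variable (halpha : ∀ K : Set ℂ, K ⊆ X → IsCompact K →
      ∀ φ : K → ℂ, Continuous φ → ∀ ε : ℝ, 0 < ε →
        ∃ q : Polynomial ℂ, ∀ z : K, ‖Polynomial.eval (z : ℂ) q - φ z‖ < ε)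
  (hc : 0 < c) (hFc : IsClosed (auxF X))
  (gseq : ℕ → X → ℂ) (hg1 : ∀ j, Continuous (gseq j))
  (hg2 : ∀ j, ∀ z : X, z ∉ Aset X K' j → gseq j z = 0)
  (μs : ℕ → ℝ) (hμs : ∀ j, 0 < μs j)

noncomputable def stepC (j : ℕ) (apre : ℕ → ℝ) : ℝ × Polynomial ℂ :=
  (exists_step X K' c halpha hc hFc j (gseq j) (hg1 j) (hg2 j) (μs j) (hμs j) apre).choose

lemma stepC_spec (j : ℕ) (apre : ℕ → ℝ) :
    0 ≤ (stepC X K' c halpha hc hFc gseq hg1 hg2 μs hμs j apre).1 ∧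
      (∀ z : X, z ∈ Bset X K' j →
        ‖Polynomial.eval (z : ℂ) (stepC X K' c halpha hc hFc gseq hg1 hg2 μs hμs j apre).2 *
          ((Real.exp (-c * ‖(z:ℂ)‖ ^ 2) *
            (auxEta0 X z * Real.exp (-(sfun X K' apre j z +
              (stepC X K' c halpha hc hFc gseq hg1 hg2 μs hμs j apre).1 * psiF X K' j z))) : ℝ) : ℂ)
          - gseq j z‖ < μs j) ∧
      (∀ z : X, ‖Polynomial.eval (z : ℂ)
          (stepC X K' c halpha hc hFc gseq hg1 hg2 μs hμs j apre).2‖ *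
        (Real.exp (-c * ‖(z:ℂ)‖ ^ 2) * auxEta0 X z) *
        Real.exp (-(stepC X K' c halpha hc hFc gseq hg1 hg2 μs hμs j apre).1) < μs j) :=
  (exists_step X K' c halpha hc hFc j (gseq j) (hg1 j) (hg2 j) (μs j) (hμs j) apre).choose_spec

noncomputable def apPre : ℕ → ℕ → ℝ × Polynomial ℂ := fun j =>
  Nat.rec (fun _ => ((0:ℝ), (0 : Polynomial ℂ)))
    (fun j prev => Function.update prev j
      (stepC X K' c halpha hc hFc gseq hg1 hg2 μs hμs j (fun i => (prev i).1))) j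

lemma apPre_succ (j : ℕ) :
    apPre X K' c halpha hc hFc gseq hg1 hg2 μs hμs (j+1) =
      Function.update (apPre X K' c halpha hc hFc gseq hg1 hg2 μs hμs j) j
        (stepC X K' c halpha hc hFc gseq hg1 hg2 μs hμs j
          (fun i => ((apPre X K' c halpha hc hFc gseq hg1 hg2 μs hμs j) i).1)) := rfl

noncomputable def aseq (j : ℕ) : ℝ :=
  ((apPre X K' c halpha hc hFc gseq hg1 hg2 μs hμs (j+1)) j).1

noncomputable def pseq (j : ℕ) : Polynomial ℂ :=
  ((apPre X K' c halpha hc hFc gseq hg1 hg2 μs hμs (j+1)) j).2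

lemma apPre_stable : ∀ j i : ℕ, i < j →
    apPre X K' c halpha hc hFc gseq hg1 hg2 μs hμs j i =
      apPre X K' c halpha hc hFc gseq hg1 hg2 μs hμs (i+1) i := by
  intro j
  induction j with
  | zero => intro i h; exact absurd h (Nat.not_lt_zero i)
  | succ j ih =>
    intro i hij
    rcases Nat.lt_succ_iff_lt_or_eq.1 hij with h | h
    · rw [apPre_succ, Function.update_of_ne (Nat.ne_of_lt h)]
      exact ih i h
    · subst h; rfl

lemma ap_spec (j : ℕ) :
    0 ≤ aseq X K' c halpha hc hFc gseq hg1 hg2 μs hμs j ∧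
      (∀ z : X, z ∈ Bset X K' j →
        ‖Polynomial.eval (z : ℂ) (pseq X K' c halpha hc hFc gseq hg1 hg2 μs hμs j) *
          ((Real.exp (-c * ‖(z:ℂ)‖ ^ 2) *
            (auxEta0 X z * Real.exp (-(sfun X K'
                (aseq X K' c halpha hc hFc gseq hg1 hg2 μs hμs) j z +
              (aseq X K' c halpha hc hFc gseq hg1 hg2 μs hμs j) * psiF X K' j z))) : ℝ) : ℂ)
          - gseq j z‖ < μs j) ∧
      (∀ z : X, ‖Polynomial.eval (z : ℂ)
          (pseq X K' c halpha hc hFc gseq hg1 hg2 μs hμs j)‖ *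
        (Real.exp (-c * ‖(z:ℂ)‖ ^ 2) * auxEta0 X z) *
        Real.exp (-(aseq X K' c halpha hc hFc gseq hg1 hg2 μs hμs j)) < μs j) := by
  have he : (apPre X K' c halpha hc hFc gseq hg1 hg2 μs hμs (j+1)) j =
      stepC X K' c halpha hc hFc gseq hg1 hg2 μs hμs j
        (fun i => ((apPre X K' c halpha hc hFc gseq hg1 hg2 μs hμs j) i).1) := by
    rw [apPre_succ, Function.update_self]
  have h1 : aseq X K' c halpha hc hFc gseq hg1 hg2 μs hμs j =
      (stepC X K' c halpha hc hFc gseq hg1 hg2 μs hμs j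
        (fun i => ((apPre X K' c halpha hc hFc gseq hg1 hg2 μs hμs j) i).1)).1 :=
    congrArg Prod.fst he
  have h2 : pseq X K' c halpha hc hFc gseq hg1 hg2 μs hμs j =
      (stepC X K' c halpha hc hFc gseq hg1 hg2 μs hμs j
        (fun i => ((apPre X K' c halpha hc hFc gseq hg1 hg2 μs hμs j) i).1)).2 :=
    congrArg Prod.snd he
  have hsf : ∀ z : X, sfun X K'
      (fun i => ((apPre X K' c halpha hc hFc gseq hg1 hg2 μs hμs j) i).1) j z =
      sfun X K' (aseq X K' c halpha hc hFc gseq hg1 hg2 μs hμs) j z := by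
    intro z
    refine Finset.sum_congr rfl fun i hi => ?_
    beta_reduce
    rw [apPre_stable X K' c halpha hc hFc gseq hg1 hg2 μs hμs j i (Finset.mem_range.1 hi)]
    rfl
  have hs := stepC_spec X K' c halpha hc hFc gseq hg1 hg2 μs hμs j
    (fun i => ((apPre X K' c halpha hc hFc gseq hg1 hg2 μs hμs j) i).1)
  refine ⟨?_, ?_, ?_⟩
  · rw [h1]; exact hs.1
  · intro z hz
    rw [h1, h2, ← hsf z]
    exact hs.2.1 z hz
  · intro z
    rw [h1, h2]
    exact hs.2.2 z

noncomputable def gfun (n : ℕ) (P : Polynomial ℚ × Polynomial ℚ) : X → ℂ := fun z =>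
  ((1 - psiF X K' n z : ℝ) : ℂ) * evalQ P (z : ℂ)

lemma gfun_cont (n : ℕ) (P : Polynomial ℚ × Polynomial ℚ) : Continuous (gfun X K' n P) :=
  (Complex.continuous_ofReal.comp (continuous_const.sub (psiF_cont X K' n))).mul
    ((evalQ_cont P).comp continuous_subtype_val)

lemma gfun_support (n : ℕ) (P : Polynomial ℚ × Polynomial ℚ) {z : X}
    (hz : z ∉ Bset X K' n) : gfun X K' n P z = 0 := by
  unfold gfun
  rw [psiF_one X K' n hz]
  simp

include halpha in
lemma famLemma (f : X → ℂ) (hfc : Continuous f) (hft : Tendsto f (cocompact X) (nhds 0))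
    (ρ : ℝ) (hρ : 0 < ρ) :
    ∃ (n : ℕ) (P : Polynomial ℚ × Polynomial ℚ), ∀ z : X, ‖gfun X K' n P z - f z‖ < ρ := by
  obtain ⟨Cs, hCs, hCsb⟩ :=
    (Filter.hasBasis_cocompact.tendsto_iff Metric.nhds_basis_ball).1 hft (ρ/4) (by positivity)
  obtain ⟨n, hn⟩ := K'.exists_superset_of_isCompact hCs
  have hCsA : Cs ⊆ Aset X K' n := hn.trans (Ksub X K' n)
  have hfsmall : ∀ z : X, z ∉ Aset X K' n → ‖f z‖ < ρ/4 := by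
    intro z hz
    have hzCs : z ∉ Cs := fun h => hz (hCsA h)
    have := hCsb z hzCs
    rwa [mem_ball, dist_zero_right] at this
  set B : Set ℂ := Subtype.val '' Bset X K' n with hB
  have hBX : B ⊆ X := Subtype.coe_image_subset X _
  have hBc : IsCompact B := (Bset_compact X K' n).image continuous_subtype_val
  set inc : B → X := fun w => ⟨w.1, hBX w.2⟩ with hinc
  have hinccont : Continuous inc := Continuous.subtype_mk continuous_subtype_val _
  obtain ⟨q, hq⟩ := halpha B hBX hBc (fun w => f (inc w)) (hfc.comp hinccont)
    (ρ/4) (by positivity)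
  obtain ⟨R, hR⟩ := hBc.exists_bound_of_continuousOn continuousOn_id
  obtain ⟨P, hP⟩ := ratApprox q R (show (0:ℝ) < ρ/4 by positivity)
  refine ⟨n, P, fun z => ?_⟩
  by_cases hzB : z ∈ Bset X K' n
  · have hzB' : (z:ℂ) ∈ B := mem_image_of_mem _ hzB
    have hq' := hq ⟨(z:ℂ), hzB'⟩
    have hincz : inc ⟨(z:ℂ), hzB'⟩ = z := Subtype.ext rfl
    rw [hincz] at hq'
    have hP' := hP (z:ℂ) (by simpa using hR (z:ℂ) hzB')
    set α : ℂ := ((1 - psiF X K' n z : ℝ) : ℂ) with hα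
    have hαle : ‖α‖ ≤ 1 := by
      rw [hα, Complex.norm_real, Real.norm_eq_abs]
      have h := psiF_mem_Icc X K' n z
      rw [abs_of_nonneg (by linarith [h.2])]
      linarith [h.1]
    have hdecomp : gfun X K' n P z - f z
        = α * (evalQ P ↑z - q.eval ↑z) + α * (q.eval ↑z - f z) + (α - 1) * f z := by
      unfold gfun
      rw [← hα]
      ring
    rw [hdecomp]
    have ht1 : ‖α * (evalQ P ↑z - q.eval ↑z)‖ < ρ/4 := by
      rw [norm_mul]
      calc ‖α‖ * ‖evalQ P ↑z - q.eval ↑z‖ ≤ 1 * ‖evalQ P ↑z - q.eval ↑z‖ :=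
            mul_le_mul_of_nonneg_right hαle (norm_nonneg _)
        _ = ‖evalQ P ↑z - q.eval ↑z‖ := one_mul _
        _ < ρ/4 := hP'
    have ht2 : ‖α * (q.eval ↑z - f z)‖ < ρ/4 := by
      rw [norm_mul]
      calc ‖α‖ * ‖q.eval ↑z - f z‖ ≤ 1 * ‖q.eval ↑z - f z‖ :=
            mul_le_mul_of_nonneg_right hαle (norm_nonneg _)
        _ = ‖q.eval ↑z - f z‖ := one_mul _
        _ < ρ/4 := hq'
    have ht3 : ‖(α - 1) * f z‖ ≤ ρ/4 := by
      by_cases hψ : psiF X K' n z = 0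
      · have hα1 : α = 1 := by rw [hα, hψ]; norm_num
        rw [hα1]
        simp
        positivity
      · have hzA : z ∉ Aset X K' n := fun h => hψ (psiF_zero X K' n h)
        have hfz := hfsmall z hzA
        rw [norm_mul]
        have hα1 : ‖α - 1‖ ≤ 1 := by
          have heq : α - 1 = ((-(psiF X K' n z) : ℝ) : ℂ) := by
            rw [hα]; push_cast; ring
          rw [heq, Complex.norm_real, Real.norm_eq_abs, abs_neg,
            abs_of_nonneg (psiF_mem_Icc X K' n z).1]
          exact (psiF_mem_Icc X K' n z).2
        calc ‖α - 1‖ * ‖f z‖ ≤ 1 * (ρ/4) :=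
              mul_le_mul hα1 hfz.le (norm_nonneg _) zero_le_one
          _ = ρ/4 := one_mul _
    calc ‖α * (evalQ P ↑z - q.eval ↑z) + α * (q.eval ↑z - f z) + (α - 1) * f z‖
        ≤ ‖α * (evalQ P ↑z - q.eval ↑z) + α * (q.eval ↑z - f z)‖ + ‖(α - 1) * f z‖ :=
          norm_add_le _ _
      _ ≤ ‖α * (evalQ P ↑z - q.eval ↑z)‖ + ‖α * (q.eval ↑z - f z)‖ + ‖(α - 1) * f z‖ := by
          linarith [norm_add_le (α * (evalQ P ↑z - q.eval ↑z)) (α * (q.eval ↑z - f z))]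
      _ < ρ := by linarith
  · rw [gfun_support X K' n P hzB, zero_sub, norm_neg]
    have hzA : z ∉ Aset X K' n := fun h => hzB (Aset_subset_Bset X K' n h)
    linarith [hfsmall z hzA]

end Stmt12Aux5


open Stmt12Aux Stmt12Aux2 Stmt12Aux3 Stmt12Aux4 Stmt12Aux5 in
/-- If `X ⊆ ℂ` is locally compact and every compact `K ⊆ X` is an α-set, then for `c > 0`
there is a strictly positive `η ∈ C₀(X)` such that `h(z) = e^{-c|z|²}·η(z)` is a cyclic
vector for `M_z` in `C₀(X)`: `q·h ∈ C₀(X)` for all `q ∈ Π(z)` and `{q·h : q ∈ Π(z)}` is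
dense in `C₀(X)` for the sup norm. -/
theorem stmt_12 (X : Set ℂ) [LocallyCompactSpace X]
    (halpha : ∀ K : Set ℂ, K ⊆ X → IsCompact K →
      ∀ φ : K → ℂ, Continuous φ → ∀ ε : ℝ, 0 < ε →
        ∃ q : Polynomial ℂ, ∀ z : K, ‖Polynomial.eval (z : ℂ) q - φ z‖ < ε)
    (c : ℝ) (hc : 0 < c) :
    ∃ η : X → ℝ, Continuous η ∧ Tendsto η (cocompact X) (nhds 0) ∧ (∀ z, 0 < η z) ∧
      (∀ q : Polynomial ℂ,
        Continuous (fun z : X =>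
          Polynomial.eval (z : ℂ) q * ((Real.exp (-c * ‖(z : ℂ)‖ ^ 2) * η z : ℝ) : ℂ)) ∧
        Tendsto (fun z : X =>
          Polynomial.eval (z : ℂ) q * ((Real.exp (-c * ‖(z : ℂ)‖ ^ 2) * η z : ℝ) : ℂ))
          (cocompact X) (nhds 0)) ∧
      (∀ f : X → ℂ, Continuous f → Tendsto f (cocompact X) (nhds 0) → ∀ ε : ℝ, 0 < ε →
        ∃ q : Polynomial ℂ, ∀ z : X,
          ‖Polynomial.eval (z : ℂ) q * ((Real.exp (-c * ‖(z : ℂ)‖ ^ 2) * η z : ℝ) : ℂ) - f z‖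
            < ε) := by
  classical
  have hFc : IsClosed (auxF X) := auxF_closed X
  set K' : CompactExhaustion X := CompactExhaustion.choice X with hK'
  haveI : Countable (AddMonoidAlgebra ℚ ℕ) := Countable.of_equiv _ AddMonoidAlgebra.coeffEquiv.symm
  haveI : Countable (Polynomial ℚ) :=
    Countable.of_equiv _ (Polynomial.toFinsuppIso ℚ).toEquiv.symm
  obtain ⟨σ, hσ⟩ := exists_surjective_nat (ℕ × (Polynomial ℚ × Polynomial ℚ) × ℕ)
  set τ : ℕ → ℕ × (Polynomial ℚ × Polynomial ℚ) × ℕ := fun j => σ (Nat.unpair j).1 with hτ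
  set gs : ℕ → X → ℂ :=
    fun j => if (τ j).1 + 1 ≤ j then gfun X K' (τ j).1 (τ j).2.1 else 0 with hgsdef
  have hg1 : ∀ j, Continuous (gs j) := by
    intro j
    rw [hgsdef]
    dsimp only
    split
    · exact gfun_cont X K' _ _
    · exact continuous_const
  have hg2 : ∀ j, ∀ z : X, z ∉ Aset X K' j → gs j z = 0 := by
    intro j z hz
    rw [hgsdef]
    dsimp only
    split
    · rename_i h
      apply gfun_support
      intro hzB
      exact hz (Aset_mono X K' h (Bset_subset_Asucc X K' (τ j).1 hzB))
    · rfl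
  set μs : ℕ → ℝ := fun j => 1 / (2 * ((τ j).2.2 + 1)) with hμsdef
  have hμs : ∀ j, 0 < μs j := by
    intro j
    rw [hμsdef]
    positivity
  set a := aseq X K' c halpha hc hFc gs hg1 hg2 μs hμs with hadef
  set p := pseq X K' c halpha hc hFc gs hg1 hg2 μs hμs with hpdef
  have haspec := ap_spec X K' c halpha hc hFc gs hg1 hg2 μs hμs
  have hann : ∀ j, 0 ≤ a j := fun j => (haspec j).1
  set S : X → ℝ := fun z => ∑ᶠ i, a i * psiF X K' i z with hSdef
  have hsupp : ∀ z : X, ∃ N : ℕ, ∀ i, N ≤ i → a i * psiF X K' i z = 0 := by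
    intro z
    obtain ⟨N, hN⟩ := K'.exists_mem z
    exact ⟨N, fun i hi => by
      rw [psiF_zero X K' i (Ksub X K' i (K'.subset hi hN)), mul_zero]⟩
  have hSfin : ∀ z : X, (Function.support fun i => a i * psiF X K' i z).Finite := by
    intro z
    obtain ⟨N, hN⟩ := hsupp z
    apply Set.Finite.subset (Set.finite_Iio N)
    intro i hi
    simp only [Function.mem_support] at hi
    by_contra h
    simp only [Set.mem_Iio, not_lt] at h
    exact hi (hN i h)
  have hSnonneg : ∀ z, 0 ≤ S z := fun z =>
    finsum_nonneg fun i => mul_nonneg (hann i) (psiF_mem_Icc X K' i z).1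
  have hSge : ∀ (j : ℕ) (z : X), a j * psiF X K' j z ≤ S z := fun j z =>
    single_le_finsum j (hSfin z) (fun i => mul_nonneg (hann i) (psiF_mem_Icc X K' i z).1)
  have hSeq : ∀ (j : ℕ) (z : X), z ∈ Bset X K' j →
      S z = sfun X K' a j z + a j * psiF X K' j z := by
    intro j z hz
    have hsub : (Function.support fun i => a i * psiF X K' i z)
        ⊆ ↑(Finset.range (j+1)) := by
      intro i hi
      simp only [Function.mem_support] at hi
      simp only [Finset.coe_range, Set.mem_Iio]
      by_contra h
      have hij : j + 1 ≤ i := not_lt.1 h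
      have hzA : z ∈ Aset X K' i := Aset_mono X K' hij (Bset_subset_Asucc X K' j hz)
      rw [psiF_zero X K' i hzA, mul_zero] at hi
      exact hi rfl
    rw [hSdef]
    dsimp only
    rw [finsum_eq_sum_of_support_subset _ hsub, Finset.sum_range_succ]
    rfl
  have hScont : Continuous S := by
    rw [hSdef]
    apply continuous_finsum (fun i => continuous_const.mul (psiF_cont X K' i))
    intro z
    obtain ⟨N, hN⟩ := K'.exists_mem z
    refine ⟨interior (K' (N+1) : Set X),
      isOpen_interior.mem_nhds (K'.subset_interior_succ N hN), ?_⟩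
    apply Set.Finite.subset (Set.finite_Iio (N+1))
    intro i hi
    obtain ⟨w, hw1, hw2⟩ := hi
    by_contra h
    simp only [Set.mem_Iio, not_lt] at h
    have hwA : w ∈ Aset X K' i := Ksub X K' i (K'.subset h (interior_subset hw2))
    rw [Function.mem_support] at hw1
    exact hw1 (by rw [Pi.mul_apply, psiF_zero X K' i hwA, mul_zero])
  set η : X → ℝ := fun z => auxEta0 X ↑z * Real.exp (-S z) with hηdef
  have hηnonneg : ∀ z : X, 0 ≤ η z := fun z =>
    mul_nonneg (auxEta0_nonneg X _) (Real.exp_nonneg _)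
  refine ⟨η, ?_, ?_, ?_, ?_, ?_⟩
  · exact ((auxEta0_cont X).comp continuous_subtype_val).mul
      (Real.continuous_exp.comp hScont.neg)
  · apply squeeze_zero hηnonneg
      (g := fun z : X => Real.exp (-‖(z:ℂ)‖ ^ 2) * auxDelta X ↑z)
    · intro z
      calc auxEta0 X ↑z * Real.exp (-S z) ≤ auxEta0 X ↑z * 1 :=
            mul_le_mul_of_nonneg_left
              (Real.exp_le_one_iff.2 (neg_nonpos.2 (hSnonneg z))) (auxEta0_nonneg X _)
        _ = auxEta0 X ↑z := mul_one _
        _ = Real.exp (-‖(z:ℂ)‖ ^ 2) * auxDelta X ↑z := rfl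
    · apply tendstoA X (fun w : ℂ => Real.exp (-‖w‖ ^ 2))
      · exact Real.continuous_exp.comp ((continuous_norm.pow 2).neg)
      · exact fun w => Real.exp_nonneg _
      · have h0 := gaussDecay (Polynomial.C 1) (zero_lt_one (α := ℝ))
        apply h0.congr
        intro w
        simp
  · intro z
    exact mul_pos (auxEta0_pos X hFc z.2) (Real.exp_pos _)
  · intro q
    have hcont : Continuous (fun z : X =>
        Polynomial.eval (z : ℂ) q * ((Real.exp (-c * ‖(z : ℂ)‖ ^ 2) * η z : ℝ) : ℂ)) := by
      have h1 : Continuous fun z : X => Polynomial.eval (z:ℂ) q :=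
        q.continuous.comp continuous_subtype_val
      have h2 : Continuous fun z : X => Real.exp (-c * ‖(z:ℂ)‖ ^ 2) * η z := by
        have h3 : Continuous η := ((auxEta0_cont X).comp continuous_subtype_val).mul
          (Real.continuous_exp.comp hScont.neg)
        have h4 : Continuous fun z : X => ‖(z:ℂ)‖ := continuous_subtype_val.norm
        exact (Real.continuous_exp.comp ((continuous_const.mul (h4.pow 2)))).mul h3
      exact h1.mul (Complex.continuous_ofReal.comp h2)
    refine ⟨hcont, ?_⟩
    apply squeeze_zero_norm
      (a := fun z : X =>
        (‖q.eval (z:ℂ)‖ * (Real.exp (-c * ‖(z:ℂ)‖ ^ 2) * Real.exp (-‖(z:ℂ)‖ ^ 2)))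
          * auxDelta X ↑z)
    · intro z
      have hnn : (0:ℝ) ≤ Real.exp (-c * ‖(z:ℂ)‖ ^ 2) * η z :=
        mul_nonneg (Real.exp_nonneg _) (hηnonneg z)
      rw [norm_mul, Complex.norm_real, Real.norm_eq_abs, abs_of_nonneg hnn]
      have h1 : η z ≤ Real.exp (-‖(z:ℂ)‖ ^ 2) * auxDelta X ↑z := by
        calc η z ≤ auxEta0 X ↑z * 1 :=
              mul_le_mul_of_nonneg_left
                (Real.exp_le_one_iff.2 (neg_nonpos.2 (hSnonneg z))) (auxEta0_nonneg X _)
          _ = Real.exp (-‖(z:ℂ)‖ ^ 2) * auxDelta X ↑z := by rw [mul_one]; rfl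
      calc ‖q.eval (z:ℂ)‖ * (Real.exp (-c * ‖(z:ℂ)‖ ^ 2) * η z)
          ≤ ‖q.eval (z:ℂ)‖ * (Real.exp (-c * ‖(z:ℂ)‖ ^ 2)
              * (Real.exp (-‖(z:ℂ)‖ ^ 2) * auxDelta X ↑z)) :=
            mul_le_mul_of_nonneg_left
              (mul_le_mul_of_nonneg_left h1 (Real.exp_nonneg _)) (norm_nonneg _)
        _ = (‖q.eval (z:ℂ)‖ * (Real.exp (-c * ‖(z:ℂ)‖ ^ 2) * Real.exp (-‖(z:ℂ)‖ ^ 2)))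
              * auxDelta X ↑z := by ring
    · apply tendstoA X (fun w : ℂ =>
        ‖q.eval w‖ * (Real.exp (-c * ‖w‖ ^ 2) * Real.exp (-‖w‖ ^ 2)))
      · exact (q.continuous.norm).mul
          ((Real.continuous_exp.comp (continuous_const.mul (continuous_norm.pow 2))).mul
            (Real.continuous_exp.comp ((continuous_norm.pow 2).neg)))
      · intro w
        positivity
      · have h0 := gaussDecay q (show (0:ℝ) < c + 1 by linarith)
        apply h0.congr
        intro w
        rw [show -(c+1) * ‖w‖ ^ 2 = -c * ‖w‖ ^ 2 + -‖w‖ ^ 2 by ring, Real.exp_add]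
  · intro f hfc hft ε hε
    obtain ⟨n, P, hgP⟩ := famLemma X K' halpha f hfc hft (ε/2) (by positivity)
    obtain ⟨m, hm⟩ := exists_nat_one_div_lt (show (0:ℝ) < ε/2 by positivity)
    obtain ⟨j₀, hj₀⟩ := hσ (n, P, m)
    set j : ℕ := Nat.pair j₀ (n+1) with hjdef
    have hτj : τ j = (n, P, m) := by
      rw [hτ]
      dsimp only
      rw [hjdef, Nat.unpair_pair]
      exact hj₀
    have hjge : n + 1 ≤ j := Nat.right_le_pair j₀ (n+1)
    have hgsj : gs j = gfun X K' n P := by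
      rw [hgsdef]
      dsimp only
      rw [hτj]
      simp [hjge]
    have hμsj : μs j = 1 / (2 * (m + 1)) := by
      rw [hμsdef]
      dsimp only
      rw [hτj]
    have hμle : μs j ≤ ε/2 := by
      rw [hμsj]
      have h1 : (1:ℝ) / (2 * (m + 1)) ≤ 1 / (m + 1) := by
        apply div_le_div_of_nonneg_left one_pos.le (by positivity)
        · nlinarith [Nat.cast_nonneg (α := ℝ) m]
      linarith
    refine ⟨p j, fun z => ?_⟩
    have hmain : ‖Polynomial.eval (z:ℂ) (p j) *
        ((Real.exp (-c * ‖(z:ℂ)‖ ^ 2) * η z : ℝ) : ℂ) - gfun X K' n P z‖ < μs j := by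
      by_cases hzB : z ∈ Bset X K' j
      · have h2 := (haspec j).2.1 z hzB
        rw [hgsj] at h2
        have hη : η z = auxEta0 X ↑z *
            Real.exp (-(sfun X K' a j z + a j * psiF X K' j z)) := by
          rw [hηdef]
          dsimp only
          rw [hSeq j z hzB]
        rw [hη]
        exact h2
      · have hg0 : gfun X K' n P z = 0 := by
          apply gfun_support
          intro hzBn
          exact hzB (Aset_subset_Bset X K' j
            (Aset_mono X K' hjge (Bset_subset_Asucc X K' n hzBn)))
        rw [hg0, sub_zero]
        have hψ1 : psiF X K' j z = 1 := psiF_one X K' j hzB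
        have hSb : a j ≤ S z := by
          have := hSge j z
          rwa [hψ1, mul_one] at this
        have h3 := (haspec j).2.2 z
        have hnn : (0:ℝ) ≤ Real.exp (-c * ‖(z:ℂ)‖ ^ 2) * η z :=
          mul_nonneg (Real.exp_nonneg _) (hηnonneg z)
        rw [norm_mul, Complex.norm_real, Real.norm_eq_abs, abs_of_nonneg hnn]
        calc ‖Polynomial.eval (z:ℂ) (p j)‖ * (Real.exp (-c * ‖(z:ℂ)‖ ^ 2) * η z)
            = ‖Polynomial.eval (z:ℂ) (p j)‖ * (Real.exp (-c * ‖(z:ℂ)‖ ^ 2) * auxEta0 X ↑z)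
                * Real.exp (-S z) := by
              rw [hηdef]
              dsimp only
              ring
          _ ≤ ‖Polynomial.eval (z:ℂ) (p j)‖ * (Real.exp (-c * ‖(z:ℂ)‖ ^ 2) * auxEta0 X ↑z)
                * Real.exp (-(a j)) := by
              apply mul_le_mul_of_nonneg_left (Real.exp_le_exp.2 (neg_le_neg hSb))
              exact mul_nonneg (norm_nonneg _)
                (mul_nonneg (Real.exp_nonneg _) (auxEta0_nonneg X _))
          _ < μs j := h3
    have htri : ‖Polynomial.eval (z:ℂ) (p j) *
        ((Real.exp (-c * ‖(z:ℂ)‖ ^ 2) * η z : ℝ) : ℂ) - f z‖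
        ≤ ‖Polynomial.eval (z:ℂ) (p j) *
            ((Real.exp (-c * ‖(z:ℂ)‖ ^ 2) * η z : ℝ) : ℂ) - gfun X K' n P z‖
          + ‖gfun X K' n P z - f z‖ := by
      have := dist_triangle (Polynomial.eval (z:ℂ) (p j) *
        ((Real.exp (-c * ‖(z:ℂ)‖ ^ 2) * η z : ℝ) : ℂ)) (gfun X K' n P z) (f z)
      simpa [dist_eq_norm] using this
    have hf2 := hgP z
    linarith
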